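/- Let (X, {R_0,...,R_d}) be a symmetric association scheme with Γ = (X, R_1) connected and H the unweighted distribution diagram of R_1; for i with d_H(0,i) = h define c(i) = Σ_{j : d_H(0,j) = h-1} p_{1j}^i. Let T be a disconnecting set for Γ and let x and z be vertices lying in different connected components of Γ \ T, with (x,z) ∈ R_i. Suppose there is some y ∈ T adjacent to z in Γ. If either x is proximal only to y, or x is proximal to y and z is proximal only to y (relative to T), then c(i) = 1. -/

import Mathlib

/-- A symmetric association scheme with `d` classes on a finite vertex set `X`:
a partition of `X × X` into nonempty symmetric relations `R 0, …, R d`, where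
`R 0` is the identity relation, together with intersection numbers `p i j k`. -/
structure SymAssocScheme (X : Type*) [Fintype X] (d : ℕ) where
  R : Fin (d + 1) → X → X → Prop
  R_nonempty : ∀ i, ∃ a b, R i a b
  R_symm : ∀ i a b, R i a b → R i b a
  R_zero : ∀ a b, R 0 a b ↔ a = b
  R_unique : ∀ a b, ∃! i, R i a b
  p : Fin (d + 1) → Fin (d + 1) → Fin (d + 1) → ℕ
  p_spec : ∀ (i j k : Fin (d + 1)) (a b : X), R k a b →
    {c : X | R i a c ∧ R j c b}.ncard = p i j k

namespace SymAssocScheme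

variable {X : Type*} [Fintype X] {d : ℕ}

/-- The (simple) graph `Γ = (X, R_i)` of the basis relation `R_i`. -/
def graph (A : SymAssocScheme X d) (i : Fin (d + 1)) : SimpleGraph X where
  Adj a b := a ≠ b ∧ A.R i a b
  symm := ⟨fun a b h => ⟨h.1.symm, A.R_symm i a b h.2⟩⟩
  loopless := ⟨fun a h => h.1 rfl⟩

/-- The unweighted distribution diagram `H_i` (with loops discarded):
`j ~ k` iff `p i j k + p i k j > 0`. -/
def diagram (A : SymAssocScheme X d) (i : Fin (d + 1)) : SimpleGraph (Fin (d + 1)) where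
  Adj j k := j ≠ k ∧ 0 < A.p i j k + A.p i k j
  symm := ⟨fun j k h => ⟨h.1.symm, by omega⟩⟩
  loopless := ⟨fun j h => h.1 rfl⟩

noncomputable def cls (A : SymAssocScheme X d) (a b : X) : Fin (d + 1) :=
  (A.R_unique a b).choose

lemma cls_spec (A : SymAssocScheme X d) (a b : X) : A.R (A.cls a b) a b :=
  (A.R_unique a b).choose_spec.1

lemma eq_cls (A : SymAssocScheme X d) {i : Fin (d+1)} {a b : X} (h : A.R i a b) :
    A.cls a b = i :=
  (((A.R_unique a b).choose_spec.2 i h)).symm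

lemma cls_self (A : SymAssocScheme X d) (a : X) : A.cls a a = 0 :=
  A.eq_cls ((A.R_zero a a).mpr rfl)

lemma one_ne_zero_fin (hd : 0 < d) : (1 : Fin (d + 1)) ≠ 0 := by
  have h1 : (1 : Fin (d + 1)).val = 1 := by
    rw [Fin.val_one']; exact Nat.mod_eq_of_lt (by omega)
  intro h
  rw [h] at h1
  simp at h1

lemma ne_of_R_one (A : SymAssocScheme X d) (hd : 0 < d) {a b : X} (h : A.R 1 a b) :
    a ≠ b := by
  rintro rfl
  exact one_ne_zero_fin hd (by rw [← A.eq_cls h, A.cls_self])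

lemma adj_iff (A : SymAssocScheme X d) (hd : 0 < d) {a b : X} :
    (A.graph 1).Adj a b ↔ A.R 1 a b :=
  ⟨fun h => h.2, fun h => ⟨A.ne_of_R_one hd h, h⟩⟩

lemma p_pos_iff (A : SymAssocScheme X d) {i j k : Fin (d+1)} {a b : X} (hk : A.R k a b) :
    0 < A.p i j k ↔ ∃ c, A.R i a c ∧ A.R j c b := by
  rw [← A.p_spec i j k a b hk, Set.ncard_pos (Set.toFinite _)]
  exact ⟨fun ⟨c, hc⟩ => ⟨c, hc⟩, fun ⟨c, hc⟩ => ⟨c, hc⟩⟩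

lemma p_pos_comm (A : SymAssocScheme X d) {j k : Fin (d+1)} (h : 0 < A.p 1 j k) :
    0 < A.p 1 k j := by
  obtain ⟨a, b, hab⟩ := A.R_nonempty k
  obtain ⟨c, h1, h2⟩ := (A.p_pos_iff hab).mp h
  exact (A.p_pos_iff h2).mpr ⟨a, A.R_symm _ _ _ h1, hab⟩

lemma p_pos_of_diagram_adj (A : SymAssocScheme X d) {j k : Fin (d+1)}
    (h : (A.diagram 1).Adj j k) : 0 < A.p 1 j k := by
  have h2 := h.2
  by_cases hp : 0 < A.p 1 j k
  · exact hp
  · exact A.p_pos_comm (by omega)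

lemma walk_decomp {V : Type*} {G : SimpleGraph V} {u v : V} {n : ℕ}
    (W : G.Walk u v) (h : W.length = n + 1) :
    ∃ (j : V) (_ : G.Adj u j) (Q : G.Walk j v), Q.length = n := by
  cases W with
  | nil => simp at h
  | cons hadj Q =>
    simp only [SimpleGraph.Walk.length_cons, Nat.succ.injEq] at h
    exact ⟨_, hadj, Q, h⟩

lemma diagram_step (A : SymAssocScheme X d) {a b c : X}
    (hbc : (A.graph 1).Adj b c) :
    A.cls a c = A.cls a b ∨ (A.diagram 1).Adj (A.cls a c) (A.cls a b) := by
  by_cases hjk : A.cls a c = A.cls a b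
  · exact Or.inl hjk
  · refine Or.inr ⟨hjk, ?_⟩
    have hk : A.R (A.cls a b) b a := A.R_symm _ _ _ (A.cls_spec a b)
    have hpos : 0 < A.p 1 (A.cls a c) (A.cls a b) :=
      (A.p_pos_iff hk).mpr ⟨c, hbc.2, A.R_symm _ _ _ (A.cls_spec a c)⟩
    omega

lemma partA (A : SymAssocScheme X d) (hconn : (A.graph 1).Connected) :
    ∀ (n : ℕ) (a b : X), (A.graph 1).dist a b = n →
      (A.diagram 1).Reachable 0 (A.cls a b) ∧ (A.diagram 1).dist 0 (A.cls a b) ≤ n := by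
  intro n
  induction n with
  | zero =>
    intro a b hab
    have : a = b := ((hconn a b).dist_eq_zero_iff).mp hab
    subst this
    rw [A.cls_self]
    exact ⟨SimpleGraph.Reachable.refl 0, by simp⟩
  | succ n ih =>
    intro a b hab
    obtain ⟨W, hW⟩ := (hconn b a).exists_walk_length_eq_dist
    rw [SimpleGraph.dist_comm, hab] at hW
    obtain ⟨c, hadj, Q, hQ⟩ := walk_decomp W hW
    have hcn : (A.graph 1).dist a c = n := by
      have h1 : (A.graph 1).dist a c ≤ n := by
        have := SimpleGraph.dist_le Q.reverse
        simpa [hQ] using this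
      have hcb : (A.graph 1).dist c b = 1 := SimpleGraph.dist_eq_one_iff_adj.mpr hadj.symm
      have h2 : (A.graph 1).dist a b ≤ (A.graph 1).dist a c + (A.graph 1).dist c b :=
        hconn.dist_triangle
      omega
    obtain ⟨hreach, hdist⟩ := ih a c hcn
    rcases A.diagram_step (a := a) hadj with heq | hadj'
    · rw [← heq]
      exact ⟨hreach, le_trans hdist (Nat.le_succ n)⟩
    · refine ⟨hreach.trans hadj'.reachable, ?_⟩
      obtain ⟨P, hP⟩ := hreach.exists_walk_length_eq_dist
      have := SimpleGraph.dist_le (P.concat hadj')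
      rw [SimpleGraph.Walk.length_concat, hP] at this
      omega

lemma partB (A : SymAssocScheme X d) (hd : 0 < d) (hconn : (A.graph 1).Connected) :
    ∀ (n : ℕ) (a b : X), (A.diagram 1).Reachable 0 (A.cls a b) →
      (A.diagram 1).dist 0 (A.cls a b) ≤ n → (A.graph 1).dist a b ≤ n := by
  intro n
  induction n with
  | zero =>
    intro a b hreach hdist
    have h0 : A.cls a b = 0 := ((hreach.dist_eq_zero_iff).mp (Nat.le_zero.mp hdist)).symm
    have : a = b := (A.R_zero a b).mp (h0 ▸ A.cls_spec a b)
    simp [this]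
  | succ n ih =>
    intro a b hreach hdist
    by_cases hle : (A.diagram 1).dist 0 (A.cls a b) ≤ n
    · exact le_trans (ih a b hreach hle) (Nat.le_succ n)
    · obtain ⟨W, hW⟩ := (hreach.symm).exists_walk_length_eq_dist
      have heq : W.length = n + 1 := by
        rw [hW, SimpleGraph.dist_comm]; omega
      obtain ⟨j, hadj, Q, hQ⟩ := walk_decomp W heq
      have hreachj : (A.diagram 1).Reachable 0 j := Q.reverse.reachable
      have hdistj : (A.diagram 1).dist 0 j ≤ n := by
        have := SimpleGraph.dist_le Q.reverse
        simpa [hQ] using this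
      have hpos : 0 < A.p 1 j (A.cls a b) := A.p_pos_of_diagram_adj hadj.symm
      obtain ⟨e, he1, hej⟩ := (A.p_pos_iff (A.cls_spec a b)).mp hpos
      have hcls : A.cls e b = j := A.eq_cls hej
      have hIH : (A.graph 1).dist e b ≤ n := ih e b (hcls ▸ hreachj) (hcls ▸ hdistj)
      have hae : (A.graph 1).dist a e = 1 :=
        SimpleGraph.dist_eq_one_iff_adj.mpr ((A.adj_iff hd).mpr he1)
      have htri : (A.graph 1).dist a b ≤ (A.graph 1).dist a e + (A.graph 1).dist e b :=
        hconn.dist_triangle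
      omega

lemma dist_eq (A : SymAssocScheme X d) (hd : 0 < d) (hconn : (A.graph 1).Connected)
    (a b : X) : (A.graph 1).dist a b = (A.diagram 1).dist 0 (A.cls a b) := by
  obtain ⟨hreach, hle⟩ := A.partA hconn ((A.graph 1).dist a b) a b rfl
  exact le_antisymm (A.partB hd hconn _ a b hreach le_rfl) hle

lemma reach_induce {V : Type*} {G : SimpleGraph V} {s : Set V} :
    ∀ {a b : V} (W : G.Walk a b), (∀ v ∈ W.support, v ∈ s) →
      ∀ (ha : a ∈ s) (hb : b ∈ s), (G.induce s).Reachable ⟨a, ha⟩ ⟨b, hb⟩ := by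
  intro a b W
  induction W with
  | nil =>
    intro _ ha hb
    exact SimpleGraph.Reachable.refl _
  | @cons u v w h p ih =>
    intro hsup ha hb
    have hv : v ∈ s := hsup v (by simp)
    have hadj : (G.induce s).Adj ⟨u, ha⟩ ⟨v, hv⟩ := by
      simpa using h
    exact hadj.reachable.trans
      (ih (fun t ht => hsup t (by simp [SimpleGraph.Walk.support_cons, ht])) hv hb)

lemma support_dist {V : Type*} [DecidableEq V] {G : SimpleGraph V} {a b u : V} (W : G.Walk a b)
    (hu : u ∈ W.support) : G.dist a u + G.dist u b ≤ W.length := by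
  have hsp := W.take_spec hu
  have hlen : (W.takeUntil u hu).length + (W.dropUntil u hu).length = W.length := by
    rw [← SimpleGraph.Walk.length_append, hsp]
  have h1 := SimpleGraph.dist_le (W.takeUntil u hu)
  have h2 := SimpleGraph.dist_le (W.dropUntil u hu)
  omega

end SymAssocScheme

open SymAssocScheme in
/-- Proposition 5.5: with `Γ = (X, R_1)` connected and
`c i = ∑_{j : d_H(0,j)+1 = d_H(0,i)} p_{1j}^i`, let `T` be a disconnecting set for
`Γ`, let `x` and `z` lie in distinct components of `Γ \ T` with `(x,z) ∈ R_i`, and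
let `y ∈ T` be adjacent to `z`. If either `x` is proximal only to `y`, or `x` is
proximal to `y` and `z` is proximal only to `y` (relative to `T`), then `c i = 1`. -/
theorem c_eq_one_of_proximal {X : Type*} [Fintype X] {d : ℕ} (hd : 0 < d)
    (A : SymAssocScheme X d) (hconn : (A.graph 1).Connected)
    (c : Fin (d + 1) → ℕ)
    (hc : ∀ i : Fin (d + 1), c i = ∑ j ∈ Finset.univ.filter
        (fun j : Fin (d + 1) =>
          (A.diagram 1).dist 0 j + 1 = (A.diagram 1).dist 0 i), A.p 1 j i)
    (T : Set X) (hT : ¬ ((A.graph 1).induce Tᶜ).Connected)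
    (x z : X) (hx : x ∈ Tᶜ) (hz : z ∈ Tᶜ)
    (hsep : ¬ ((A.graph 1).induce Tᶜ).Reachable ⟨x, hx⟩ ⟨z, hz⟩)
    (i : Fin (d + 1)) (hi : A.R i x z)
    (y : X) (hy : y ∈ T) (hyz : (A.graph 1).Adj z y)
    (hprox :
      (∀ y' ∈ T, y' ≠ y → (A.graph 1).dist x y < (A.graph 1).dist x y') ∨
      ((∀ y' ∈ T, (A.graph 1).dist x y ≤ (A.graph 1).dist x y') ∧
        ∀ y' ∈ T, y' ≠ y → (A.graph 1).dist z y < (A.graph 1).dist z y')) :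
    c i = 1 := by
  classical
  set Γ := A.graph 1 with hΓ
  set H := A.diagram 1 with hH
  set h := Γ.dist x z with hh
  -- basic facts
  have hxT : x ∉ T := hx
  have hzT : z ∉ T := hz
  have hxz : x ≠ z := by
    rintro rfl
    exact hsep (SimpleGraph.Reachable.refl _)
  have hyne_z : y ≠ z := fun e => hzT (e ▸ hy)
  have hxy_ne : x ≠ y := fun e => hxT (e ▸ hy)
  have hpos : 1 ≤ h := hconn.pos_dist_of_ne hxz
  have hdzy : Γ.dist z y = 1 := SimpleGraph.dist_eq_one_iff_adj.mpr hyz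
  have hdyz : Γ.dist y z = 1 := by rw [SimpleGraph.dist_comm]; exact hdzy
  have hhxy : h ≤ Γ.dist x y + 1 := by
    have := hconn.dist_triangle (u := x) (v := y) (w := z)
    omega
  -- every walk from z to x meets T
  have meets : ∀ (W : Γ.Walk z x), ∃ y' ∈ T, y' ∈ W.support := by
    intro W
    by_contra hcon
    push_neg at hcon
    have hsub : ∀ v ∈ W.support, v ∈ Tᶜ := fun v hv hvT => hcon v hvT hv
    exact hsep ((reach_induce W hsub hz hx).symm)
  -- KEY: the only T-vertex close to the pair is y
  have KEY : ∀ y' ∈ T, Γ.dist x y' + Γ.dist y' z ≤ h → y' = y := by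
    intro y' hy'T hsum
    have hy'z : y' ≠ z := fun e => hzT (e ▸ hy'T)
    have h1 : 1 ≤ Γ.dist y' z := hconn.pos_dist_of_ne hy'z
    by_contra hne
    rcases hprox with hP | ⟨hP1, hP2⟩
    · have := hP y' hy'T hne
      omega
    · have h2 := hP2 y' hy'T hne
      have h4 := hP1 y' hy'T
      have h5 : Γ.dist z y' = Γ.dist y' z := SimpleGraph.dist_comm
      omega
  -- dist x y = h - 1
  have hxy_h : Γ.dist x y + 1 = h := by
    obtain ⟨W, hW⟩ := (hconn z x).exists_walk_length_eq_dist
    have hWlen : W.length = h := by rw [hW, SimpleGraph.dist_comm]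
    obtain ⟨y', hy'T, hy'mem⟩ := meets W
    have hsd := support_dist W hy'mem
    rw [hWlen, SimpleGraph.dist_comm (u := z) (v := y'),
      SimpleGraph.dist_comm (u := y') (v := x)] at hsd
    have : y' = y := KEY y' hy'T (by omega)
    subst this
    omega
  -- uniqueness of the neighbor of z at distance h-1 from x
  have UNIQ : ∀ e : X, Γ.Adj z e → Γ.dist x e + 1 = h → e = y := by
    intro e hze he
    by_contra hey
    obtain ⟨P, hP⟩ := (hconn e x).exists_walk_length_eq_dist
    have hPlen : P.length + 1 = h := by rw [hP, SimpleGraph.dist_comm]; omega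
    set W : Γ.Walk z x := SimpleGraph.Walk.cons hze P with hWdef
    have hWlen : W.length = h := by
      rw [hWdef, SimpleGraph.Walk.length_cons]; omega
    obtain ⟨y', hy'T, hy'mem⟩ := meets W
    have hsd := support_dist W hy'mem
    rw [hWlen, SimpleGraph.dist_comm (u := z) (v := y'),
      SimpleGraph.dist_comm (u := y') (v := x)] at hsd
    have hy'y : y' = y := KEY y' hy'T (by omega)
    subst hy'y
    have hymem : y' ∈ P.support := by
      rw [hWdef, SimpleGraph.Walk.support_cons] at hy'mem
      rcases List.mem_cons.mp hy'mem with h' | h'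
      · exact absurd h' hyne_z
      · exact h'
    have hsd2 := support_dist P hymem
    have hye : Γ.dist e y' = 0 := by
      have hd1 : Γ.dist y' x ≥ h - 1 := by
        rw [SimpleGraph.dist_comm]; omega
      omega
    exact hey (((hconn e y').dist_eq_zero_iff).mp hye) |>.elim
  -- translate to the diagram
  have hclsi : A.cls z x = i := A.eq_cls (A.R_symm _ _ _ hi)
  have hHi : H.dist 0 i = h := by
    rw [← hclsi, ← A.dist_eq hd hconn, SimpleGraph.dist_comm]
  obtain ⟨j0, hj0⟩ : ∃ j0, A.cls y x = j0 := ⟨_, rfl⟩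
  have hyxH : Γ.dist y x = H.dist 0 j0 := by
    rw [hΓ, hH, ← hj0]; exact A.dist_eq hd hconn y x
  have hcyx : Γ.dist y x = Γ.dist x y := SimpleGraph.dist_comm
  have hj0dist : H.dist 0 j0 + 1 = H.dist 0 i := by omega
  have hj0F : j0 ∈ Finset.univ.filter
      (fun j : Fin (d + 1) => H.dist 0 j + 1 = H.dist 0 i) := by
    simp [hj0dist]
  rw [hc i]
  rw [Finset.sum_eq_single_of_mem j0 hj0F]
  · -- p 1 j0 i = 1
    have hspec := A.p_spec 1 j0 i z x (A.R_symm _ _ _ hi)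
    rw [← hspec]
    have hset : {e : X | A.R 1 z e ∧ A.R j0 e x} = {y} := by
      ext e
      simp only [Set.mem_setOf_eq, Set.mem_singleton_iff]
      constructor
      · rintro ⟨h1, h2⟩
        have hze : Γ.Adj z e := (A.adj_iff hd).mpr h1
        have hce : A.cls e x = j0 := A.eq_cls h2
        have hje : Γ.dist e x = H.dist 0 j0 := by
          rw [hΓ, hH, ← hce]; exact A.dist_eq hd hconn e x
        have hcex : Γ.dist e x = Γ.dist x e := SimpleGraph.dist_comm
        exact UNIQ e hze (by omega)
      · intro he
        rw [he]
        exact ⟨hyz.2, hj0 ▸ A.cls_spec y x⟩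
    rw [hset, Set.ncard_singleton]
  · -- other terms vanish
    intro j hjF hjne
    by_contra hp0
    have hppos : 0 < A.p 1 j i := Nat.pos_of_ne_zero hp0
    obtain ⟨e, h1, h2⟩ := (A.p_pos_iff (A.R_symm _ _ _ hi)).mp hppos
    have hze : Γ.Adj z e := (A.adj_iff hd).mpr h1
    have hce : A.cls e x = j := A.eq_cls h2
    simp only [Finset.mem_filter, Finset.mem_univ, true_and] at hjF
    have hje : Γ.dist e x = H.dist 0 j := by
      rw [hΓ, hH, ← hce]; exact A.dist_eq hd hconn e x
    have hcex : Γ.dist e x = Γ.dist x e := SimpleGraph.dist_comm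
    have hey : e = y := UNIQ e hze (by omega)
    exact hjne (by rw [← hce, hey, hj0])
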